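/- The topology τ_Γ induced on the Hahn field 𝓕 by any well-bounded partition Γ of ℚ is strictly coarser than the valuation (order) topology τ_v: every τ_Γ-open set is τ_v-open, and there exists a τ_v-open set (namely an interval (−d^n, d^n) for suitable n) that is not τ_Γ-open. -/

import Mathlib

open scoped Classical

/-- The Hahn field `𝓕` of maps `ℚ → ℝ` with well-ordered support. -/
noncomputable abbrev F := HahnSeries ℚ ℝ

/-- A subset `A` of `ℚ` is well-bounded if every nonempty subset of `A`
has a maximum element. -/
def WellBoundedSet (A : Set ℚ) : Prop :=
  ∀ S ⊆ A, S.Nonempty → ∃ m ∈ S, ∀ a ∈ S, a ≤ m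

/-- A well-bounded partition of `ℚ`: a countable family of mutually disjoint
well-bounded sets whose union is all of `ℚ`. -/
def IsWBPartition (γ : ℕ → Set ℚ) : Prop :=
  Pairwise (Function.onFun Disjoint γ) ∧ (∀ i, WellBoundedSet (γ i)) ∧
    (⋃ i, γ i) = Set.univ

/-- A finite well-bounded partition of `ℚ`: each piece is moreover finite. -/
def IsFinWBPartition (γ : ℕ → Set ℚ) : Prop :=
  IsWBPartition γ ∧ ∀ i, (γ i).Finite

/-- `Γ_n`, the union of the first `n` pieces of the partition. -/
def Gam (γ : ℕ → Set ℚ) (n : ℕ) : Set ℚ := ⋃ i < n, γ i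

/-- The semi-norm `‖x‖_{Γ,n} = max {|x[q]| : q ∈ Γ_n}` induced by a well-bounded
partition `Γ` of `ℚ` (realized as a supremum together with `0`). -/
noncomputable def gnorm (γ : ℕ → Set ℚ) (n : ℕ) (x : F) : ℝ :=
  sSup (insert 0 ((fun q => |x.coeff q|) '' Gam γ n))

/-- `μ(r) = ⌈1/r⌉`. -/
noncomputable def mu (r : ℝ) : ℕ := ⌈1 / r⌉₊

/-- The pseudo-ball `B_Γ(x, r) = {y | ‖x − y‖_{Γ,μ(r)} < r}`. -/
def PB (γ : ℕ → Set ℚ) (x : F) (r : ℝ) : Set F :=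
  {y : F | gnorm γ (mu r) (x - y) < r}

/-- The topology `τ_Γ` induced by the semi-norms of the partition `Γ`, as the
collection of its open sets. -/
def Top' (γ : ℕ → Set ℚ) : Set (Set F) :=
  {O : Set F | ∀ x ∈ O, ∃ r : ℝ, 0 < r ∧ PB γ x r ⊆ O}

/-- The valuation (order) topology `τ_v` on `𝓕`, given via the valuation balls:
a set is open iff around each of its points it contains a ball
`{y | |y − x|_u < e^{−n}} = {y | y = x ∨ λ(y − x) > n}`. -/
def TopV : Set (Set F) :=
  {O : Set F | ∀ x ∈ O, ∃ n : ℚ, {y : F | y = x ∨ (y - x ≠ 0 ∧ n < (y - x).order)} ⊆ O}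

lemma wb_union {A B : Set ℚ} (hA : WellBoundedSet A) (hB : WellBoundedSet B) :
    WellBoundedSet (A ∪ B) := by
  intro S hS hne
  by_cases hSA : (S ∩ A).Nonempty
  · obtain ⟨a, ⟨haS, _⟩, ha⟩ := hA (S ∩ A) Set.inter_subset_right hSA
    by_cases hSB : (S ∩ B).Nonempty
    · obtain ⟨b, ⟨hbS, _⟩, hb⟩ := hB (S ∩ B) Set.inter_subset_right hSB
      refine ⟨max a b, ?_, ?_⟩
      · rcases max_choice a b with h | h <;> rw [h] <;> assumption
      · intro s hs
        rcases hS hs with h | h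
        · exact le_trans (ha s ⟨hs, h⟩) (le_max_left a b)
        · exact le_trans (hb s ⟨hs, h⟩) (le_max_right a b)
    · refine ⟨a, haS, fun s hs => ?_⟩
      rcases hS hs with h | h
      · exact ha s ⟨hs, h⟩
      · exact absurd ⟨s, hs, h⟩ hSB
  · have hSB : ∀ s ∈ S, s ∈ B := by
      intro s hs
      rcases hS hs with h | h
      · exact absurd ⟨s, hs, h⟩ hSA
      · exact h
    obtain ⟨b, hbS, hb⟩ := hB S (fun s hs => hSB s hs) hne
    exact ⟨b, hbS, hb⟩

lemma wb_Gam {γ : ℕ → Set ℚ} (h : ∀ i, WellBoundedSet (γ i)) (n : ℕ) :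
    WellBoundedSet (Gam γ n) := by
  induction n with
  | zero =>
      intro S hS hne
      obtain ⟨s, hs⟩ := hne
      have := hS hs
      simp [Gam] at this
  | succ n ih =>
      have : Gam γ (n + 1) = Gam γ n ∪ γ n := by
        ext q
        simp only [Gam, Set.mem_iUnion, Set.mem_union, Nat.lt_succ_iff_lt_or_eq]
        constructor
        · rintro ⟨i, hi | rfl, hq⟩
          · exact Or.inl ⟨i, hi, hq⟩
          · exact Or.inr hq
        · rintro (⟨i, hi, hq⟩ | hq)
          · exact ⟨i, Or.inl hi, hq⟩
          · exact ⟨n, Or.inr rfl, hq⟩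
      rw [this]
      exact wb_union ih (h n)

lemma gnorm_eq_zero {γ : ℕ → Set ℚ} {n : ℕ} {x : F}
    (h : ∀ q ∈ Gam γ n, x.coeff q = 0) : gnorm γ n x = 0 := by
  have himg : insert 0 ((fun q => |x.coeff q|) '' Gam γ n) = {0} := by
    apply Set.Subset.antisymm
    · rintro a (rfl | ⟨q, hq, rfl⟩)
      · rfl
      · simp [h q hq]
    · rintro a rfl
      exact Set.mem_insert 0 _
  rw [gnorm, himg, csSup_singleton]

/-- `τ_Γ` is strictly coarser than the valuation topology `τ_v`: every
`τ_Γ`-open set is `τ_v`-open, and some `τ_v`-open set is not `τ_Γ`-open. -/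
theorem TopGamma_strictly_coarser_than_valuation
    (γ : ℕ → Set ℚ) (hγ : IsWBPartition γ) :
    Top' γ ⊆ TopV ∧ ∃ O ∈ TopV, O ∉ Top' γ := by
  obtain ⟨-, hwb, -⟩ := hγ
  constructor
  · -- every τ_Γ-open set is τ_v-open
    intro O hO x hx
    obtain ⟨r, hr, hPB⟩ := hO x hx
    by_cases hne : (Gam γ (mu r)).Nonempty
    · obtain ⟨M, hM, hMmax⟩ := wb_Gam hwb (mu r) (Gam γ (mu r)) (fun _ h => h) hne
      refine ⟨M, fun y hy => hPB ?_⟩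
      have hz : ∀ q ∈ Gam γ (mu r), (x - y).coeff q = 0 := by
        intro q hq
        rcases hy with rfl | ⟨hne', hlt⟩
        · simp
        · have : q < (y - x).order := lt_of_le_of_lt (hMmax q hq) hlt
          have h0 : (y - x).coeff q = 0 := HahnSeries.coeff_eq_zero_of_lt_order this
          have : (x - y) = -(y - x) := by ring
          rw [this, HahnSeries.coeff_neg, h0, neg_zero]
      show gnorm γ (mu r) (x - y) < r
      rw [gnorm_eq_zero hz]; exact hr
    · refine ⟨0, fun y _ => hPB ?_⟩
      show gnorm γ (mu r) (x - y) < r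
      rw [gnorm_eq_zero (fun q hq => absurd ⟨q, hq⟩ hne)]; exact hr
  · -- the valuation ball of radius e^0 at 0 is τ_v-open but not τ_Γ-open
    refine ⟨{y : F | y = 0 ∨ (y ≠ 0 ∧ (0 : ℚ) < y.order)}, ?_, ?_⟩
    · intro x hx
      refine ⟨0, fun y hy => ?_⟩
      rcases hy with rfl | ⟨hne', hlt⟩
      · exact hx
      · by_cases hy0 : y = 0
        · exact Or.inl hy0
        · refine Or.inr ⟨hy0, ?_⟩
          rcases hx with rfl | ⟨hx0, hxo⟩
          · simpa using hlt
          · have hadd : (y - x) + x = y := sub_add_cancel y x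
            have hy0' : (y - x) + x ≠ 0 := by rw [hadd]; exact hy0
            have : min (y - x).order x.order ≤ y.order := by
              conv_rhs => rw [← hadd]
              exact HahnSeries.min_order_le_order_add hy0'
            exact lt_of_lt_of_le (lt_min hlt hxo) this
    · intro hO
      obtain ⟨r, hr, hPB⟩ := hO 0 (Or.inl rfl)
      -- find q ∈ (-1, 0) not in Gam γ (mu r)
      have hq : ∃ q : ℚ, q ∈ Set.Ioo (-1 : ℚ) 0 ∧ q ∉ Gam γ (mu r) := by
        by_contra hcon
        push_neg at hcon
        obtain ⟨M, hM, hMmax⟩ := wb_Gam hwb (mu r) (Set.Ioo (-1 : ℚ) 0)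
          (fun q hqI => hcon q hqI)
          ⟨-1/2, by norm_num, by norm_num⟩
        obtain ⟨hM1, hM0⟩ := hM
        have h2 : M / 2 ∈ Set.Ioo (-1 : ℚ) 0 := ⟨by linarith, by linarith⟩
        have := hMmax (M / 2) h2
        linarith
      obtain ⟨q, ⟨hq1, hq0⟩, hqG⟩ := hq
      set y : F := HahnSeries.single q (1 : ℝ) with hy
      have hy0 : y ≠ 0 := HahnSeries.single_ne_zero one_ne_zero
      have hyO : y ∈ PB γ 0 r := by
        show gnorm γ (mu r) (0 - y) < r
        have hz : ∀ p ∈ Gam γ (mu r), (0 - y).coeff p = 0 := by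
          intro p hp
          have hpq : p ≠ q := fun h => hqG (h ▸ hp)
          simp [hy]
          exact HahnSeries.coeff_single_of_ne hpq
        rw [gnorm_eq_zero hz]; exact hr
      have := hPB hyO
      rcases this with h | ⟨-, hord⟩
      · exact hy0 h
      · rw [hy, HahnSeries.order_single one_ne_zero] at hord
        exact absurd hord (not_lt.mpr hq0.le)
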